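/- Let X be a nonempty finite set, d a regular detection function on X with q_x(y) → 0 as y → ∞ for each x, and π a target density on X. Let x₀, x₁ ∈ X be distinct cells with d(x₀,·) = d(x₁,·), and let π̃ be the target density obtained from π by interchanging the masses at x₀ and x₁ (π̃(x₀) = π(x₁), π̃(x₁) = π(x₀), π̃(x) = π(x) otherwise). Then Q̃(λ) = Q(λ) for all λ > 0, where Q(λ) = ∑_{x∈X} q_x^{-1}(λ) is computed from π and Q̃(λ) = ∑_{x∈X} q̃_x^{-1}(λ) from π̃. Moreover, if π(x₁) > π(x₀), then for every λ with 0 < λ < π(x₁)·∂d(x₀,y)/∂y|_{y=0} one has q̃_{x₀}^{-1}(λ) > q_{x₀}^{-1}(λ). -/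

import Mathlib

open Finset

/-- (Case (i) in the proof of Theorem 3.) Swapping the target-probability
masses of two cells `x₀ ≠ x₁` with identical detection functions leaves `Q` unchanged, and
if `π x₁ > π x₀` the new inverse rate of return at `x₀` strictly exceeds the old one for
every `0 < λ < π x₁ · ∂d(x₀,y)/∂y |_{y=0}`. -/
theorem swap_density_Q_unchanged
    {X : Type*} [Fintype X] [Nonempty X] [DecidableEq X]
    (d d' : X → ℝ → ℝ)
    (hdrange : ∀ x, ∀ y ∈ Set.Ici (0:ℝ), d x y ∈ Set.Icc (0:ℝ) 1)
    (hd0 : ∀ x, d x 0 = 0)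
    (hderiv : ∀ x, ∀ y ∈ Set.Ici (0:ℝ), HasDerivWithinAt (d x) (d' x y) (Set.Ici 0) y)
    (hd'cont : ∀ x, ContinuousOn (d' x) (Set.Ici 0))
    (hd'pos : ∀ x, ∀ y ∈ Set.Ici (0:ℝ), 0 < d' x y)
    (hd'anti : ∀ x, StrictAntiOn (d' x) (Set.Ici 0))
    (π : X → ℝ) (hπpos : ∀ x, 0 < π x) (hπsum : ∑ x, π x = 1)
    (htend : ∀ x, Filter.Tendsto (fun y => π x * d' x y) Filter.atTop (nhds 0))
    (x₀ x₁ : X) (hne : x₀ ≠ x₁)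
    (hsame : d x₀ = d x₁)
    (πt : X → ℝ)
    (hswap₀ : πt x₀ = π x₁) (hswap₁ : πt x₁ = π x₀)
    (hswap : ∀ x, x ≠ x₀ → x ≠ x₁ → πt x = π x)
    (qinv qtinv : X → ℝ → ℝ)
    (hqinv : ∀ x, ∀ l : ℝ, 0 < l →
      (l ≤ π x * d' x 0 → 0 ≤ qinv x l ∧ π x * d' x (qinv x l) = l) ∧
      (π x * d' x 0 < l → qinv x l = 0))
    (hqtinv : ∀ x, ∀ l : ℝ, 0 < l →
      (l ≤ πt x * d' x 0 → 0 ≤ qtinv x l ∧ πt x * d' x (qtinv x l) = l) ∧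
      (πt x * d' x 0 < l → qtinv x l = 0)) :
    (∀ l : ℝ, 0 < l → ∑ x, qtinv x l = ∑ x, qinv x l) ∧
    (π x₀ < π x₁ →
      ∀ l : ℝ, 0 < l → l < π x₁ * d' x₀ 0 → qinv x₀ l < qtinv x₀ l) := by

  have hd'eq : ∀ y ∈ Set.Ici (0:ℝ), d' x₀ y = d' x₁ y := by
    intro y hy
    exact UniqueDiffWithinAt.eq_deriv _ (uniqueDiffOn_Ici (0:ℝ) y hy)
      (hderiv x₀ y hy) (by rw [hsame]; exact hderiv x₁ y hy)
  have uniq : ∀ (x : X) (c l : ℝ), 0 < c → ∀ a b : ℝ, 0 ≤ a → 0 ≤ b →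
      c * d' x a = l → c * d' x b = l → a = b := by
    intro x c l hc a b ha hb hA hB
    exact (hd'anti x).injOn ha hb (mul_left_cancel₀ hc.ne' (hA.trans hB.symm))
  have hqt_eq : ∀ l : ℝ, 0 < l → ∀ x : X, qtinv x l = qinv ((Equiv.swap x₀ x₁) x) l := by
    intro l hl x
    by_cases hx0 : x = x₀
    · subst hx0
      rw [Equiv.swap_apply_left]
      have h0 : d' x 0 = d' x₁ 0 := hd'eq 0 Set.self_mem_Ici
      by_cases hle : l ≤ π x₁ * d' x₁ 0
      · obtain ⟨ha, hA⟩ := (hqtinv x l hl).1 (by rw [hswap₀, h0]; exact hle)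
        obtain ⟨hb, hB⟩ := (hqinv x₁ l hl).1 hle
        rw [hswap₀, hd'eq _ ha] at hA
        exact uniq x₁ (π x₁) l (hπpos x₁) _ _ ha hb hA hB
      · rw [(hqtinv x l hl).2 (by rw [hswap₀, h0]; exact lt_of_not_ge hle),
          (hqinv x₁ l hl).2 (lt_of_not_ge hle)]
    · by_cases hx1 : x = x₁
      · subst hx1
        rw [Equiv.swap_apply_right]
        have h0 : d' x 0 = d' x₀ 0 := (hd'eq 0 Set.self_mem_Ici).symm
        by_cases hle : l ≤ π x₀ * d' x₀ 0
        · obtain ⟨ha, hA⟩ := (hqtinv x l hl).1 (by rw [hswap₁, h0]; exact hle)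
          obtain ⟨hb, hB⟩ := (hqinv x₀ l hl).1 hle
          rw [hswap₁, ← hd'eq _ ha] at hA
          exact uniq x₀ (π x₀) l (hπpos x₀) _ _ ha hb hA hB
        · rw [(hqtinv x l hl).2 (by rw [hswap₁, h0]; exact lt_of_not_ge hle),
            (hqinv x₀ l hl).2 (lt_of_not_ge hle)]
      · rw [Equiv.swap_apply_of_ne_of_ne hx0 hx1]
        have hπt : πt x = π x := hswap x hx0 hx1
        by_cases hle : l ≤ π x * d' x 0
        · obtain ⟨ha, hA⟩ := (hqtinv x l hl).1 (by rw [hπt]; exact hle)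
          obtain ⟨hb, hB⟩ := (hqinv x l hl).1 hle
          rw [hπt] at hA
          exact uniq x (π x) l (hπpos x) _ _ ha hb hA hB
        · rw [(hqtinv x l hl).2 (by rw [hπt]; exact lt_of_not_ge hle),
            (hqinv x l hl).2 (lt_of_not_ge hle)]
  constructor
  · intro l hl
    exact Fintype.sum_equiv (Equiv.swap x₀ x₁) _ _ (hqt_eq l hl)
  · intro hlt l hl hl'
    have hle' : l ≤ πt x₀ * d' x₀ 0 := by rw [hswap₀]; exact hl'.le
    obtain ⟨ha, hA⟩ := (hqtinv x₀ l hl).1 hle'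
    rw [hswap₀] at hA
    have hqtpos : 0 < qtinv x₀ l := by
      rcases ha.lt_or_eq with h | h
      · exact h
      · exfalso; rw [← h] at hA; exact absurd hA hl'.ne'
    by_cases hle : l ≤ π x₀ * d' x₀ 0
    · obtain ⟨hb, hB⟩ := (hqinv x₀ l hl).1 hle
      -- π x₀ * d' x₀ b = l = π x₁ * d' x₀ a, π x₀ < π x₁ ⇒ d' x₀ b > d' x₀ a ⇒ b < a
      have hda : 0 < d' x₀ (qtinv x₀ l) := hd'pos x₀ _ ha
      have h1 : π x₀ * d' x₀ (qtinv x₀ l) < l := by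
        have := mul_lt_mul_of_pos_right hlt hda
        rwa [hA] at this
      have h2 : π x₀ * d' x₀ (qtinv x₀ l) < π x₀ * d' x₀ (qinv x₀ l) := by
        rw [hB]; exact h1
      have hdlt : d' x₀ (qtinv x₀ l) < d' x₀ (qinv x₀ l) :=
        lt_of_mul_lt_mul_left h2 (hπpos x₀).le
      by_contra hcon
      push_neg at hcon
      exact absurd (((hd'anti x₀).le_iff_ge hb ha).mpr hcon) (not_le.mpr hdlt)
    · rw [(hqinv x₀ l hl).2 (lt_of_not_ge hle)]
      exact hqtpos
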